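/- arXiv:2203.07121 — 3 statements merged into one kernel-verified Lean document; each statement's English description precedes it below -/
import Mathlib

section
/- Let T > 0, σ ∈ ℕ, p ∈ [1,∞), and let P ⊆ ℝ_{≥0}^σ be a polytope, i.e., P = conv(F) for some finite set F ⊆ ℝ_{≥0}^σ. For b ∈ {0,1} and 0 ≤ t₁ ≤ … ≤ t_σ, let u_{b;t₁,…,t_σ} : [0,∞) → {0,1} be defined by u_{b;t₁,…,t_σ}(t) = b if |{i : t_i ≤ t}| is even and 1 − b otherwise. Define the set of switching point constraints D_P as the set of all u ∈ L^p(0,T) such that there exist b ∈ {0,1} and (t₁,…,t_σ) ∈ P with t₁ ≤ … ≤ t_σ and u = u_{b;t₁,…,t_σ} almost everywhere on (0,T). Then D_P is closed in L^p(0,T). -/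
open MeasureTheory Set Filter
open scoped ENNReal NNReal Topology

/-- The parametrized binary step function `u_{b;t₁,…,t_σ}`: it takes the value
`b` at `x` if the number of switching points `t_i ≤ x` is even, and `1 - b`
otherwise. -/
noncomputable def switchFun (σ : ℕ) (b : ℝ) (t : Fin σ → ℝ) : ℝ → ℝ :=
  fun x => if Even ((Finset.univ.filter fun i => t i ≤ x).card) then b else 1 - b

lemma switchFun_measurable (σ : ℕ) (b : ℝ) (t : Fin σ → ℝ) :
    Measurable (switchFun σ b t) := by
  unfold switchFun
  refine Measurable.ite ?_ measurable_const measurable_const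
  have hm : Measurable fun x : ℝ => (Finset.univ.filter fun i => t i ≤ x).card := by
    have : (fun x : ℝ => (Finset.univ.filter fun i => t i ≤ x).card) =
        fun x : ℝ => ∑ i : Fin σ, if t i ≤ x then 1 else 0 := by
      funext x; rw [Finset.card_filter]
    rw [this]
    exact Finset.measurable_sum _ fun i _ =>
      Measurable.ite measurableSet_Ici measurable_const measurable_const
  have hset : MeasurableSet {n : ℕ | Even n} := MeasurableSpace.measurableSet_top
  exact hm hset

lemma switchFun_bound {b : ℝ} (hb : b = 0 ∨ b = 1) (σ : ℕ) (t : Fin σ → ℝ) (x : ℝ) :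
    ‖switchFun σ b t x‖ ≤ 1 := by
  unfold switchFun
  rcases hb with rfl | rfl <;> split <;> norm_num

lemma switchFun_tendsto {σ : ℕ} {bn : ℕ → ℝ} {tn : ℕ → Fin σ → ℝ} {b : ℝ}
    {t : Fin σ → ℝ} {x : ℝ} (hb : Tendsto bn atTop (𝓝 b))
    (ht : Tendsto tn atTop (𝓝 t)) (hx : ∀ i, t i ≠ x) :
    Tendsto (fun n => switchFun σ (bn n) (tn n) x) atTop (𝓝 (switchFun σ b t x)) := by
  have hcoord : ∀ i, Tendsto (fun n => tn n i) atTop (𝓝 (t i)) := fun i =>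
    (tendsto_pi_nhds.1 ht) i
  have hcond : ∀ i : Fin σ, ∀ᶠ n in atTop, ((tn n i ≤ x) ↔ (t i ≤ x)) := by
    intro i
    rcases lt_or_gt_of_ne (hx i) with h | h
    · filter_upwards [(hcoord i).eventually (eventually_lt_nhds h)] with n hn
      simp [hn.le, h.le]
    · filter_upwards [(hcoord i).eventually (eventually_gt_nhds h)] with n hn
      simp [not_le.2 hn, not_le.2 h]
  have hcard : ∀ᶠ n in atTop, (Finset.univ.filter fun i => tn n i ≤ x).card =
      (Finset.univ.filter fun i => t i ≤ x).card := by
    filter_upwards [eventually_all.2 hcond] with n hn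
    congr 1
    apply Finset.filter_congr
    intro i _
    simp [hn i]
  have hlim : Tendsto (fun n => if Even ((Finset.univ.filter fun i => t i ≤ x).card)
      then bn n else 1 - bn n) atTop (𝓝 (switchFun σ b t x)) := by
    unfold switchFun
    split
    · exact hb
    · exact tendsto_const_nhds.sub hb
  refine hlim.congr' ?_
  filter_upwards [hcard] with n hn
  unfold switchFun
  rw [hn]

set_option synthInstance.maxHeartbeats 1000000 in
/-- Lemma of Section 3.2, closedness: for a polytope
`P = conv F ⊆ ℝ_{≥0}^σ`, the set `D_P` of switching point constraints, i.e. of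
all `u ∈ L^p(0,T)` agreeing a.e. with some `u_{b;t₁,…,t_σ}` with binary `b`
and sorted `(t₁,…,t_σ) ∈ P`, is closed in `L^p(0,T)`. -/
theorem stmt_14
    (T : ℝ) (hT : 0 < T) (σ : ℕ) (p : ℝ≥0∞) [Fact (1 ≤ p)] (hp : p ≠ ⊤)
    (F : Finset (Fin σ → ℝ)) (hF : ∀ x ∈ F, ∀ i, 0 ≤ x i) :
    IsClosed {u : Lp ℝ p (volume.restrict (Ioo (0:ℝ) T)) |
      ∃ b : ℝ, (b = 0 ∨ b = 1) ∧ ∃ t : Fin σ → ℝ, Monotone t ∧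
        t ∈ convexHull ℝ (F : Set (Fin σ → ℝ)) ∧
        (u : ℝ → ℝ) =ᵐ[volume.restrict (Ioo (0:ℝ) T)] switchFun σ b t} := by
  set μ : Measure ℝ := volume.restrict (Ioo (0:ℝ) T) with hμ
  haveI : IsFiniteMeasure μ := by
    constructor
    rw [hμ, Measure.restrict_apply_univ, Real.volume_Ioo]
    exact ENNReal.ofReal_lt_top
  have hp0 : p ≠ 0 := (lt_of_lt_of_le zero_lt_one (Fact.out : 1 ≤ p)).ne'
  have hmem : ∀ (b : ℝ), (b = 0 ∨ b = 1) → ∀ t : Fin σ → ℝ,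
      MemLp (switchFun σ b t) p μ := fun b hb t =>
    MemLp.of_bound (switchFun_measurable σ b t).aestronglyMeasurable 1
      (Eventually.of_forall (switchFun_bound hb σ t))
  rw [← isSeqClosed_iff_isClosed]
  intro u ulim hu hulim
  choose b hb t hmono hhull hueq using hu
  -- the compact parameter set
  have hKmono : IsClosed {t : Fin σ → ℝ | Monotone t} := by
    have : {t : Fin σ → ℝ | Monotone t} =
        ⋂ (i : Fin σ) (j : Fin σ) (_ : i ≤ j), {t : Fin σ → ℝ | t i ≤ t j} := by
      ext f; simp [Monotone]
    rw [this]
    exact isClosed_iInter fun i => isClosed_iInter fun j => isClosed_iInter fun _ =>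
      isClosed_le (continuous_apply i) (continuous_apply j)
  have hK : IsCompact (({0, 1} : Set ℝ) ×ˢ
      ({t : Fin σ → ℝ | Monotone t} ∩ convexHull ℝ (F : Set (Fin σ → ℝ)))) := by
    refine IsCompact.prod ((Set.toFinite ({0, 1} : Set ℝ)).isCompact) ?_
    exact (F.finite_toSet.isCompact_convexHull ℝ).inter_left hKmono
  obtain ⟨⟨b₀, t₀⟩, hmemK, φ, hφ, hconv⟩ :=
    hK.tendsto_subseq (x := fun n => (b n, t n)) fun n => by
      refine ⟨?_, hmono n, hhull n⟩
      rcases hb n with h | h <;> simp [h]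
  have hb₀ : b₀ = 0 ∨ b₀ = 1 := by
    have := hmemK.1; simpa using this
  have ht₀mono : Monotone t₀ := hmemK.2.1
  have ht₀hull : t₀ ∈ convexHull ℝ (F : Set (Fin σ → ℝ)) := hmemK.2.2
  have hbtend : Tendsto (fun n => b (φ n)) atTop (𝓝 b₀) :=
    (continuous_fst.tendsto (b₀, t₀)).comp hconv
  have httend : Tendsto (fun n => t (φ n)) atTop (𝓝 t₀) :=
    (continuous_snd.tendsto (b₀, t₀)).comp hconv
  set g : ℝ → ℝ := switchFun σ b₀ t₀ with hg
  have hgmem : MemLp g p μ := hmem b₀ hb₀ t₀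
  set f : ℕ → ℝ → ℝ := fun n => switchFun σ (b (φ n)) (t (φ n)) with hf
  -- a.e. pointwise convergence
  have hae : ∀ᵐ x ∂μ, ∀ i, t₀ i ≠ x := by
    rw [ae_all_iff]
    intro i
    refine ae_restrict_of_ae ?_
    rw [ae_iff]
    have : {x : ℝ | ¬ t₀ i ≠ x} = {t₀ i} := by ext x; simp [eq_comm]
    rw [this]
    exact measure_singleton _
  have haelim : ∀ᵐ x ∂μ, Tendsto (fun n => f n x) atTop (𝓝 (g x)) := by
    filter_upwards [hae] with x hx
    exact switchFun_tendsto hbtend httend hx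
  -- convergence of eLpNorms via dominated convergence
  set q : ℝ := p.toReal with hqdef
  have hq : 0 < q := ENNReal.toReal_pos hp0 hp
  have hlint : Tendsto (fun n => ∫⁻ x, (‖f n x - g x‖₊ : ℝ≥0∞) ^ q ∂μ) atTop (𝓝 0) := by
    have h0 : (0 : ℝ≥0∞) = ∫⁻ x, (‖(0:ℝ)‖₊ : ℝ≥0∞) ^ q ∂μ := by
      simp [ENNReal.zero_rpow_of_pos hq]
    rw [h0]
    refine tendsto_lintegral_of_dominated_convergence (fun _ => (2:ℝ≥0∞) ^ q) ?_ ?_ ?_ ?_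
    · intro n
      exact (((switchFun_measurable _ _ _).sub (switchFun_measurable _ _ _)).enorm).pow_const q
    · intro n
      refine Eventually.of_forall fun x => ?_
      refine ENNReal.rpow_le_rpow ?_ hq.le
      have h1 : ‖f n x - g x‖ ≤ 2 := by
        calc ‖f n x - g x‖ ≤ ‖f n x‖ + ‖g x‖ := norm_sub_le _ _
          _ ≤ 1 + 1 := add_le_add (switchFun_bound (hb (φ n)) σ _ x)
              (switchFun_bound hb₀ σ _ x)
          _ = 2 := by norm_num
      have h2 : ‖f n x - g x‖₊ ≤ (2 : ℝ≥0) := by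
        rw [← NNReal.coe_le_coe]; simpa using h1
      exact_mod_cast h2
    · rw [lintegral_const]
      exact ENNReal.mul_ne_top (ENNReal.rpow_ne_top_of_nonneg hq.le (by norm_num))
        (measure_ne_top μ _)
    · filter_upwards [haelim] with x hx
      have h1 : Tendsto (fun n => f n x - g x) atTop (𝓝 (g x - g x)) :=
        hx.sub tendsto_const_nhds
      rw [sub_self] at h1
      have h2 : Tendsto (fun n => (‖f n x - g x‖₊ : ℝ≥0∞)) atTop (𝓝 (‖(0:ℝ)‖₊ : ℝ≥0∞)) :=
        ENNReal.tendsto_coe.2 (h1.nnnorm)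
      exact (ENNReal.continuous_rpow_const.tendsto _).comp h2
  have hsn : Tendsto (fun n => eLpNorm (f n - g) p μ) atTop (𝓝 0) := by
    have heq : ∀ n, eLpNorm (f n - g) p μ =
        (∫⁻ x, (‖f n x - g x‖₊ : ℝ≥0∞) ^ q ∂μ) ^ (1 / q) := fun n => by
      rw [eLpNorm_eq_lintegral_rpow_enorm_toReal hp0 hp]
      rfl
    simp only [heq]
    have hcont := (ENNReal.continuous_rpow_const (y := 1 / q)).tendsto 0
    have h0 : (0 : ℝ≥0∞) ^ (1 / q) = 0 :=
      ENNReal.zero_rpow_of_pos (by positivity)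
    rw [h0] at hcont
    exact hcont.comp hlint
  -- conclude in Lp
  have hsn' : Tendsto (fun n => eLpNorm ((u (φ n) : ℝ → ℝ) - g) p μ) atTop (𝓝 0) := by
    refine hsn.congr fun n => ?_
    exact (eLpNorm_congr_ae ((hueq (φ n)).sub (EventuallyEq.refl _ _))).symm
  have hLp : Tendsto (fun n => u (φ n)) atTop (𝓝 (hgmem.toLp g)) :=
    (Lp.tendsto_Lp_iff_tendsto_eLpNorm _ g hgmem).2 hsn'
  have hLp' : Tendsto (fun n => u (φ n)) atTop (𝓝 ulim) :=
    hulim.comp hφ.tendsto_atTop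
  have : ulim = hgmem.toLp g := tendsto_nhds_unique hLp' hLp
  refine ⟨b₀, hb₀, t₀, ht₀mono, ht₀hull, ?_⟩
  rw [this]
  exact hgmem.coeFn_toLp
end

section
/- Let T > 0, s > 0, p ∈ [1,∞), and set σ := ⌈T/s⌉. For b ∈ {0,1} and 0 ≤ t₁ ≤ … ≤ t_σ, let u_{b;t₁,…,t_σ} : [0,∞) → {0,1} be defined by u_{b;t₁,…,t_σ}(t) = b if |{i : t_i ≤ t}| is even and 1 − b otherwise. Define the minimum dwell time constraint set D_s ⊆ L^p(0,T) as the set of all u such that there exist b ∈ {0,1} and t₁,…,t_σ ≥ 0 with t_j − t_{j−1} ≥ s for j = 2,…,σ and u = u_{b;t₁,…,t_σ} almost everywhere on (0,T). Let I_i = (a_i,b_i), i = 1,…,M, be pairwise disjoint nonempty open subintervals of (0,T), define Π : L^p(0,T) → ℝ^M by Π(u)_i = (1/λ(I_i)) ∫_{I_i} u dλ, set C_{D_s,Π} := conv{Π(u) : u ∈ D_s}, and define S := [0,T] ∩ (⋃_{m∈ℤ} (m·s + E)) where E := {0,T} ∪ {a_i, b_i : i = 1,…,M}. Then for every extreme point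 v of C_{D_s,Π} there exist b ∈ {0,1} and t₁,…,t_σ ≥ 0 with t_j − t_{j−1} ≥ s for j = 2,…,σ such that the class of u_{b;t₁,…,t_σ} restricted to (0,T) satisfies Π(u_{b;t₁,…,t_σ}) = v and t_i ∈ S for every i with t_i ≤ T. -/
open MeasureTheory Set Filter
open scoped ENNReal

open scoped Classical

lemma lowerset_eq_range (G : Finset ℕ) (h : ∀ a b, a ≤ b → b ∈ G → a ∈ G) :
    G = Finset.range G.card := by
  ext k
  simp only [Finset.mem_range]
  constructor
  · intro hk
    have hsub : Finset.range (k+1) ⊆ G := by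
      intro m hm
      exact h m k (by simpa using Nat.lt_succ_iff.mp (Finset.mem_range.mp hm)) hk
    have := Finset.card_le_card hsub
    simpa using this
  · intro hk
    by_contra hkG
    have hsub : G ⊆ Finset.range k := by
      intro g hg
      simp only [Finset.mem_range]
      by_contra hgk
      exact hkG (h k g (le_of_not_gt hgk) hg)
    have := Finset.card_le_card hsub
    simp at this; omega

lemma mem_filter_le_iff {σ : ℕ} {t : Fin σ → ℝ} (ht : StrictMono t) (x : ℝ) (j : Fin σ) :
    t j ≤ x ↔ (j : ℕ) < (Finset.univ.filter fun i => t i ≤ x).card := by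
  classical
  set F := (Finset.univ.filter fun i => t i ≤ x) with hF
  have hcard : (F.image Fin.val).card = F.card := Finset.card_image_of_injective _ Fin.val_injective
  have hlow : ∀ a b, a ≤ b → b ∈ F.image Fin.val → a ∈ F.image Fin.val := by
    intro a b hab hb
    rcases Finset.mem_image.mp hb with ⟨jb, hjb, rfl⟩
    have hjbx : t jb ≤ x := by simpa [hF] using (Finset.mem_filter.mp hjb).2
    have haσ : a < σ := lt_of_le_of_lt hab jb.isLt
    refine Finset.mem_image.mpr ⟨⟨a, haσ⟩, ?_, rfl⟩
    simp only [hF, Finset.mem_filter, Finset.mem_univ, true_and]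
    exact le_trans (ht.monotone (by simpa [Fin.le_def] using hab)) hjbx
  have hrange := lowerset_eq_range _ hlow
  rw [hcard] at hrange
  constructor
  · intro hj
    have : (j : ℕ) ∈ F.image Fin.val :=
      Finset.mem_image.mpr ⟨j, by simp [hF, hj], rfl⟩
    rw [hrange] at this; simpa using this
  · intro hj
    have : (j : ℕ) ∈ F.image Fin.val := by rw [hrange]; simpa using hj
    rcases Finset.mem_image.mp this with ⟨j', hj', hval⟩
    have : j' = j := Fin.val_injective hval
    subst this
    simpa [hF] using (Finset.mem_filter.mp hj').2

lemma switchFun_apply {σ : ℕ} (c : ℝ) {t : Fin σ → ℝ} (ht : StrictMono t) (x : ℝ) :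
    switchFun σ c t x
      = c + (1 - 2*c) * ∑ j : Fin σ, (-1:ℝ)^(j:ℕ) * (if t j ≤ x then 1 else 0) := by
  classical
  set N := (Finset.univ.filter fun i => t i ≤ x).card with hN
  have hNσ : N ≤ σ := by
    have := Finset.card_filter_le (Finset.univ : Finset (Fin σ)) (fun i => t i ≤ x)
    simpa [hN] using this
  have hsum : (∑ j : Fin σ, (-1:ℝ)^(j:ℕ) * (if t j ≤ x then 1 else 0))
      = if Even N then 0 else 1 := by
    have h1 : ∀ j : Fin σ, (-1:ℝ)^(j:ℕ) * (if t j ≤ x then 1 else 0)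
        = if (j:ℕ) < N then (-1:ℝ)^(j:ℕ) else 0 := by
      intro j
      by_cases hj : t j ≤ x
      · rw [if_pos hj, if_pos ((mem_filter_le_iff ht x j).mp hj)]; ring
      · rw [if_neg hj, if_neg (fun h => hj ((mem_filter_le_iff ht x j).mpr h))]; ring
    rw [Finset.sum_congr rfl (fun j _ => h1 j)]
    rw [Fin.sum_univ_eq_sum_range (fun k => if k < N then (-1:ℝ)^k else 0) σ]
    rw [← Finset.sum_filter]
    have : Finset.filter (fun k => k < N) (Finset.range σ) = Finset.range N := by
      ext k; simp only [Finset.mem_filter, Finset.mem_range]; omega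
    rw [this, neg_one_geom_sum]
  rw [hsum]
  unfold switchFun
  rw [← hN]
  by_cases hE : Even N
  · rw [if_pos hE, if_pos hE]; ring
  · rw [if_neg hE, if_neg hE]; ring

example (a b : ℝ) : volume (Set.Ioo a b) < ⊤ := measure_Ioo_lt_top

lemma integral_ind_Ioo (a b τ : ℝ) (hab : a ≤ b) :
    ∫ x in Set.Ioo a b, (if τ ≤ x then (1:ℝ) else 0) = b - min b (max a τ) := by
  have hind : (fun x => if τ ≤ x then (1:ℝ) else 0) = (Set.Ici τ).indicator (fun _ => (1:ℝ)) := by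
    ext x; by_cases h : τ ≤ x <;> simp [Set.indicator, h]
  rw [hind, integral_indicator measurableSet_Ici, Measure.restrict_restrict measurableSet_Ici,
    setIntegral_const]
  by_cases hτ : τ ≤ a
  · have : Set.Ici τ ∩ Set.Ioo a b = Set.Ioo a b := by
      apply Set.inter_eq_right.mpr
      intro x hx; exact le_trans hτ (le_of_lt hx.1)
    rw [this, Real.volume_real_Ioo_of_le (by linarith)]
    rw [min_eq_right (by rw [max_eq_left hτ]; exact hab), max_eq_left hτ, smul_eq_mul]
    ring
  · push_neg at hτ
    have : Set.Ici τ ∩ Set.Ioo a b = Set.Ico τ b := by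
      ext x
      simp only [Set.mem_inter_iff, Set.mem_Ici, Set.mem_Ioo, Set.mem_Ico]
      constructor
      · rintro ⟨h1, _, h3⟩; exact ⟨h1, h3⟩
      · rintro ⟨h1, h2⟩; exact ⟨h1, lt_of_lt_of_le hτ h1, h2⟩
    rw [this, Real.volume_real_Ico]
    rw [max_eq_right (le_of_lt hτ)]
    by_cases hτb : τ ≤ b
    · rw [max_eq_left (by linarith), min_eq_right hτb, smul_eq_mul]; ring
    · push_neg at hτb
      rw [max_eq_right (by linarith), min_eq_left (le_of_lt hτb)]
      simp

lemma integrable_ind_Ioo (a b τ : ℝ) :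
    MeasureTheory.IntegrableOn (fun x => if τ ≤ x then (1:ℝ) else 0) (Set.Ioo a b) volume := by
  have hind : (fun x => if τ ≤ x then (1:ℝ) else 0) = (Set.Ici τ).indicator (fun _ => (1:ℝ)) := by
    ext x; by_cases h : τ ≤ x <;> simp [Set.indicator, h]
  rw [hind]
  exact (integrableOn_const measure_Ioo_lt_top.ne).indicator measurableSet_Ici

lemma integral_switchFun {σ : ℕ} (c : ℝ) {t : Fin σ → ℝ} (ht : StrictMono t)
    {a b : ℝ} (hab : a ≤ b) :
    ∫ x in Set.Ioo a b, switchFun σ c t x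
      = c*(b-a) + (1-2*c) * ∑ j : Fin σ, (-1:ℝ)^(j:ℕ) * (b - min b (max a (t j))) := by
  have hcong : ∫ x in Set.Ioo a b, switchFun σ c t x
      = ∫ x in Set.Ioo a b,
          (c + (1 - 2*c) * ∑ j : Fin σ, (-1:ℝ)^(j:ℕ) * (if t j ≤ x then 1 else 0)) := by
    apply integral_congr_ae
    exact Filter.Eventually.of_forall (fun x => switchFun_apply c ht x)
  rw [hcong]
  have hint : ∀ j : Fin σ, MeasureTheory.IntegrableOn
      (fun x => (-1:ℝ)^(j:ℕ) * (if t j ≤ x then 1 else 0)) (Set.Ioo a b) volume := by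
    intro j
    exact (integrable_ind_Ioo a b (t j)).const_mul _
  have hintsum : MeasureTheory.IntegrableOn
      (fun x => (1 - 2*c) * ∑ j : Fin σ, (-1:ℝ)^(j:ℕ) * (if t j ≤ x then 1 else 0))
      (Set.Ioo a b) volume := by
    exact (MeasureTheory.integrable_finset_sum Finset.univ (fun j _ => hint j)).const_mul _
  rw [MeasureTheory.integral_add (integrableOn_const measure_Ioo_lt_top.ne :
    IntegrableOn (fun _ => c) (Set.Ioo a b) volume) hintsum]
  rw [integral_const_mul]
  rw [MeasureTheory.integral_finset_sum Finset.univ (fun j _ => hint j)]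
  have h1 : ∀ j : Fin σ, (∫ x in Set.Ioo a b, (-1:ℝ)^(j:ℕ) * (if t j ≤ x then 1 else 0))
      = (-1:ℝ)^(j:ℕ) * (b - min b (max a (t j))) := by
    intro j
    rw [integral_const_mul, integral_ind_Ioo a b (t j) hab]
  rw [Finset.sum_congr rfl (fun j _ => h1 j)]
  rw [setIntegral_const, Real.volume_real_Ioo_of_le hab, smul_eq_mul]
  ring

namespace St16

variable {T s : ℝ} {σ M : ℕ} {A B : Fin M → ℝ}

def Feas (s : ℝ) {σ : ℕ} (t : Fin σ → ℝ) : Prop :=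
  (∀ i, 0 ≤ t i) ∧ ∀ i i' : Fin σ, (i : ℕ) + 1 = (i' : ℕ) → s ≤ t i' - t i

def Gpts (T s : ℝ) {M : ℕ} (A B : Fin M → ℝ) : Set ℝ :=
  ⋃ (m : ℤ), (fun x => (m : ℝ) * s + x) '' ({0, T} ∪ (Set.range A ∪ Set.range B))

def Good (T s : ℝ) {M : ℕ} (A B : Fin M → ℝ) (τ : ℝ) : Prop :=
  T < τ ∨ τ ∈ Gpts T s A B

noncomputable def PiF {M : ℕ} (A B : Fin M → ℝ) (σ : ℕ) (c : ℝ) (t : Fin σ → ℝ) :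
    Fin M → ℝ :=
  fun m => (B m - A m)⁻¹ * ∫ x in Set.Ioo (A m) (B m), switchFun σ c t x

def Vset (T s : ℝ) {M : ℕ} (A B : Fin M → ℝ) (σ : ℕ) (c : ℝ) : Set (Fin M → ℝ) :=
  {w | ∃ t : Fin σ → ℝ, Feas s t ∧ (∀ i, Good T s A B (t i)) ∧ w = PiF A B σ c t}

lemma Feas.strictMono (hs : 0 < s) {t : Fin σ → ℝ} (h : Feas s t) : StrictMono t := by
  cases σ with
  | zero => exact fun a => absurd a.2 (by omega)
  | succ n =>
    rw [Fin.strictMono_iff_lt_succ]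
    intro i
    have := h.2 (Fin.castSucc i) i.succ (by simp)
    have : s ≤ t i.succ - t (Fin.castSucc i) := this
    linarith

noncomputable def badSet (T s : ℝ) {M : ℕ} (A B : Fin M → ℝ) {σ : ℕ} (t : Fin σ → ℝ) :
    Finset (Fin σ) :=
  Finset.univ.filter (fun i => ¬ Good T s A B (t i))

def nxt {σ : ℕ} (j : Fin σ) : Fin σ :=
  if h : (j : ℕ) + 1 < σ then ⟨(j : ℕ) + 1, h⟩ else j

noncomputable def gapSet (s : ℝ) {σ : ℕ} (t : Fin σ → ℝ) : Finset (Fin σ) :=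
  Finset.univ.filter (fun j => (j : ℕ) + 1 < σ ∧ s < t (nxt j) - t j)

noncomputable def mes (T s : ℝ) {M : ℕ} (A B : Fin M → ℝ) {σ : ℕ} (t : Fin σ → ℝ) : ℕ :=
  (badSet T s A B t).card * (σ + 1) + (gapSet s t).card

lemma clamp_combo {am bm x z y aa bb : ℝ} (hab : am ≤ bm) (hxz : x ≤ z) (hzy : z ≤ y)
    (hsum : aa + bb = 1) (hmix : aa * x + bb * y = z)
    (h1 : y ≤ am ∨ am ≤ x) (h2 : y ≤ bm ∨ bm ≤ x) :
    aa * min bm (max am x) + bb * min bm (max am y) = min bm (max am z) := by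
  rcases h1 with h1 | h1
  · rw [max_eq_left (le_trans (le_trans hxz hzy) h1), max_eq_left (le_trans hzy h1),
      max_eq_left h1, min_eq_right hab]
    linear_combination am * hsum
  · rcases h2 with h2 | h2
    · rw [max_eq_right h1, max_eq_right (le_trans h1 hxz), max_eq_right (le_trans h1 (le_trans hxz hzy)),
        min_eq_right h2, min_eq_right (le_trans hzy h2), min_eq_right (le_trans hxz (le_trans hzy h2))]
      exact hmix
    · rw [max_eq_right h1, max_eq_right (le_trans h1 hxz), max_eq_right (le_trans h1 (le_trans hxz hzy)),
        min_eq_left h2, min_eq_left (le_trans h2 hxz), min_eq_left (le_trans h2 (le_trans hxz hzy))]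
      linear_combination bm * hsum


def Eset (T : ℝ) {M : ℕ} (A B : Fin M → ℝ) : Set ℝ :=
  {0, T} ∪ (Set.range A ∪ Set.range B)

noncomputable def Efin (T : ℝ) {M : ℕ} (A B : Fin M → ℝ) : Finset ℝ :=
  insert 0 (insert T (Finset.image A Finset.univ ∪ Finset.image B Finset.univ))

lemma mem_Efin_iff {e : ℝ} : e ∈ Efin T A B ↔ e ∈ Eset T A B := by
  simp only [Efin, Finset.mem_insert, Finset.mem_union, Finset.mem_image, Finset.mem_univ,
    true_and, Eset, Set.mem_union, Set.mem_insert_iff, Set.mem_singleton_iff, Set.mem_range]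
  tauto

lemma mem_Gpts_iff {x : ℝ} :
    x ∈ Gpts T s A B ↔ ∃ m : ℤ, ∃ e ∈ Eset T A B, x = (m : ℝ) * s + e := by
  simp only [Gpts, Set.mem_iUnion, Set.mem_image, Eset]
  constructor
  · rintro ⟨m, e, he, rfl⟩; exact ⟨m, e, he, rfl⟩
  · rintro ⟨m, e, he, rfl⟩; exact ⟨m, e, he, rfl⟩

def Kset (s : ℝ) {σ : ℕ} (t : Fin σ → ℝ) (i : Fin σ) : Set (Fin σ) :=
  {j | ∃ m : ℤ, t j = t i + (m : ℝ) * s}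

lemma self_mem_Kset {t : Fin σ → ℝ} {i : Fin σ} : i ∈ Kset s t i :=
  ⟨0, by simp⟩

noncomputable def dR (s ti e : ℝ) : ℝ := e + s * ((⌊(ti - e)/s⌋ : ℤ) + 1) - ti

noncomputable def dL (s ti e : ℝ) : ℝ := ti - e - s * ((⌈(ti - e)/s⌉ : ℤ) - 1)

lemma dR_pos (hs : 0 < s) (ti e : ℝ) : 0 < dR s ti e := by
  have h1 : (ti - e)/s < (⌊(ti - e)/s⌋ : ℝ) + 1 := Int.lt_floor_add_one _
  have h2 : s * ((ti - e)/s) < s * ((⌊(ti - e)/s⌋ : ℝ) + 1) :=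
    (mul_lt_mul_iff_right₀ hs).mpr h1
  rw [mul_div_cancel₀ _ (ne_of_gt hs)] at h2
  unfold dR; push_cast; linarith

lemma dL_pos (hs : 0 < s) (ti e : ℝ) : 0 < dL s ti e := by
  have h1 : (⌈(ti - e)/s⌉ : ℝ) - 1 < (ti - e)/s := by
    have := Int.ceil_lt_add_one ((ti - e)/s); linarith
  have h2 : s * ((⌈(ti - e)/s⌉ : ℝ) - 1) < s * ((ti - e)/s) :=
    (mul_lt_mul_iff_right₀ hs).mpr h1
  rw [mul_div_cancel₀ _ (ne_of_gt hs)] at h2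
  unfold dL; push_cast; linarith

lemma dR_min (hs : 0 < s) {ti e δ : ℝ} {m : ℤ} (hδ : 0 < δ) (h : ti + δ = e + (m : ℝ) * s) :
    dR s ti e ≤ δ := by
  have hx : (ti - e)/s < (m : ℝ) := by
    rw [div_lt_iff₀ hs]; linarith
  have hm : ⌊(ti - e)/s⌋ + 1 ≤ m := by
    have := Int.floor_lt.mpr hx; omega
  have : s * ((⌊(ti - e)/s⌋ : ℝ) + 1) ≤ s * (m : ℝ) := by
    apply mul_le_mul_of_nonneg_left _ (le_of_lt hs)
    exact_mod_cast hm
  unfold dR; push_cast; linarith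

lemma dL_min (hs : 0 < s) {ti e δ : ℝ} {m : ℤ} (hδ : 0 < δ) (h : ti - δ = e + (m : ℝ) * s) :
    dL s ti e ≤ δ := by
  have hx : (m : ℝ) < (ti - e)/s := by
    rw [lt_div_iff₀ hs]; linarith
  have hm : m ≤ ⌈(ti - e)/s⌉ - 1 := by
    have := Int.lt_ceil.mpr hx; omega
  have : s * (m : ℝ) ≤ s * ((⌈(ti - e)/s⌉ : ℝ) - 1) := by
    apply mul_le_mul_of_nonneg_left _ (le_of_lt hs)
    exact_mod_cast hm
  unfold dL; push_cast; linarith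



lemma step (hs : 0 < s) (hAB : ∀ m, A m < B m) (c : ℝ) (t : Fin σ → ℝ)
    (hfeas : Feas s t) (i : Fin σ) (hbad : ¬ Good T s A B (t i)) :
    ∃ tP tM : Fin σ → ℝ, Feas s tP ∧ Feas s tM ∧
      mes T s A B tP < mes T s A B t ∧ mes T s A B tM < mes T s A B t ∧
      PiF A B σ c t ∈ segment ℝ (PiF A B σ c tM) (PiF A B σ c tP) := by
  classical
  have hng : ∀ e ∈ Efin T A B, ∀ m : ℤ, t i ≠ e + (m : ℝ) * s := by
    intro e he m heq
    exact hbad (Or.inr (mem_Gpts_iff.mpr ⟨m, e, mem_Efin_iff.mp he, by linarith⟩))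
  set K := Kset s t i with hKdef
  have coe_nxt : ∀ j : Fin σ, (j : ℕ) + 1 < σ → ((nxt j : Fin σ) : ℕ) = (j : ℕ) + 1 := by
    intro j h; simp [nxt, h]
  have gap_ge : ∀ j : Fin σ, (j : ℕ) + 1 < σ → s ≤ t (nxt j) - t j :=
    fun j h => hfeas.2 j (nxt j) (coe_nxt j h).symm
  have gapRK : ∀ j : Fin σ, (j : ℕ) + 1 < σ → j ∈ K → nxt j ∉ K → s < t (nxt j) - t j := by
    intro j h hjK hnK
    rcases hjK with ⟨m, hm⟩
    rcases lt_or_eq_of_le (gap_ge j h) with h' | h'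
    · exact h'
    · exact absurd (⟨m + 1, by push_cast; linarith⟩ : nxt j ∈ K) hnK
  have gapLK : ∀ j : Fin σ, (j : ℕ) + 1 < σ → j ∉ K → nxt j ∈ K → s < t (nxt j) - t j := by
    intro j h hjK hnK
    rcases hnK with ⟨m, hm⟩
    rcases lt_or_eq_of_le (gap_ge j h) with h' | h'
    · exact h'
    · exact absurd (⟨m - 1, by push_cast; linarith⟩ : j ∈ K) hjK
  set FRs := (Efin T A B).image (dR s (t i)) ∪
      ((Finset.univ.filter (fun j : Fin σ => (j : ℕ) + 1 < σ ∧ j ∈ K ∧ nxt j ∉ K)).image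
        (fun j => t (nxt j) - t j - s)) with hFRdef
  set FLs := (Efin T A B).image (dL s (t i)) ∪
      ((Finset.univ.filter (fun j : Fin σ => (j : ℕ) + 1 < σ ∧ j ∉ K ∧ nxt j ∈ K)).image
        (fun j => t (nxt j) - t j - s)) with hFLdef
  have h0E : (0 : ℝ) ∈ Efin T A B := Finset.mem_insert_self _ _
  have hTE : T ∈ Efin T A B := Finset.mem_insert_of_mem (Finset.mem_insert_self _ _)
  have hAE : ∀ m, A m ∈ Efin T A B := fun m =>
    Finset.mem_insert_of_mem (Finset.mem_insert_of_mem
      (Finset.mem_union_left _ (Finset.mem_image_of_mem _ (Finset.mem_univ m))))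
  have hBE : ∀ m, B m ∈ Efin T A B := fun m =>
    Finset.mem_insert_of_mem (Finset.mem_insert_of_mem
      (Finset.mem_union_right _ (Finset.mem_image_of_mem _ (Finset.mem_univ m))))
  have hFRne : FRs.Nonempty :=
    ⟨dR s (t i) 0, Finset.mem_union_left _ (Finset.mem_image_of_mem _ h0E)⟩
  have hFLne : FLs.Nonempty :=
    ⟨dL s (t i) 0, Finset.mem_union_left _ (Finset.mem_image_of_mem _ h0E)⟩
  have hFRpos : ∀ δ ∈ FRs, 0 < δ := by
    intro δ hδ
    rcases Finset.mem_union.mp hδ with h | h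
    · rcases Finset.mem_image.mp h with ⟨e, _, rfl⟩; exact dR_pos hs _ _
    · rcases Finset.mem_image.mp h with ⟨j, hj, rfl⟩
      obtain ⟨h1, h2, h3⟩ := (Finset.mem_filter.mp hj).2
      linarith [gapRK j h1 h2 h3]
  have hFLpos : ∀ δ ∈ FLs, 0 < δ := by
    intro δ hδ
    rcases Finset.mem_union.mp hδ with h | h
    · rcases Finset.mem_image.mp h with ⟨e, _, rfl⟩; exact dL_pos hs _ _
    · rcases Finset.mem_image.mp h with ⟨j, hj, rfl⟩
      obtain ⟨h1, h2, h3⟩ := (Finset.mem_filter.mp hj).2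
      linarith [gapLK j h1 h2 h3]
  set δR := FRs.min' hFRne with hδRdef
  set δL := FLs.min' hFLne with hδLdef
  have hδRpos : 0 < δR := hFRpos _ (FRs.min'_mem hFRne)
  have hδLpos : 0 < δL := hFLpos _ (FLs.min'_mem hFLne)
  have hδRle : ∀ δ ∈ FRs, δR ≤ δ := fun δ => FRs.min'_le δ
  have hδLle : ∀ δ ∈ FLs, δL ≤ δ := fun δ => FLs.min'_le δ
  set tP := fun j => if j ∈ K then t j + δR else t j with htPdef
  set tM := fun j => if j ∈ K then t j - δL else t j with htMdef
  -- no-touch lemma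
  have hnt : ∀ θ : ℝ, -δL < θ → θ < δR → ∀ j ∈ K, ∀ e ∈ Efin T A B, ∀ m : ℤ,
      t j + θ ≠ e + (m : ℝ) * s := by
    intro θ hθL hθR j hjK e he m heq
    rcases hjK with ⟨mj, hmj⟩
    have heq' : t i + θ = e + ((m - mj : ℤ) : ℝ) * s := by push_cast; linarith
    rcases lt_trichotomy θ 0 with h0 | h0 | h0
    · have h1 : dL s (t i) e ≤ -θ :=
        dL_min hs (by linarith) (by push_cast at heq' ⊢; linarith)
      have h2 : δL ≤ dL s (t i) e :=
        hδLle _ (Finset.mem_union_left _ (Finset.mem_image_of_mem _ he))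
      linarith
    · exact hng e he (m - mj) (by rw [← heq', h0, add_zero])
    · have h1 : dR s (t i) e ≤ θ := dR_min hs h0 heq'
      have h2 : δR ≤ dR s (t i) e :=
        hδRle _ (Finset.mem_union_left _ (Finset.mem_image_of_mem _ he))
      linarith
  -- feasibility of tP
  have succ_eq : ∀ j j' : Fin σ, (j : ℕ) + 1 = (j' : ℕ) → ((j : ℕ) + 1 < σ ∧ j' = nxt j) := by
    intro j j' h
    have hlt : (j : ℕ) + 1 < σ := h ▸ j'.isLt
    exact ⟨hlt, Fin.val_injective (by rw [coe_nxt j hlt, ← h])⟩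
  have hfeasP : Feas s tP := by
    constructor
    · intro j
      by_cases hj : j ∈ K
      · simp only [htPdef, if_pos hj]; linarith [hfeas.1 j]
      · simp only [htPdef, if_neg hj]; exact hfeas.1 j
    · intro j j' hjj'
      obtain ⟨hlt, rfl⟩ := succ_eq j j' hjj'
      by_cases h1 : j ∈ K <;> by_cases h2 : nxt j ∈ K
      · simp only [htPdef, if_pos h1, if_pos h2]; linarith [gap_ge j hlt]
      · have : δR ≤ t (nxt j) - t j - s := by
          apply hδRle
          exact Finset.mem_union_right _ (Finset.mem_image_of_mem _
            (Finset.mem_filter.mpr ⟨Finset.mem_univ _, hlt, h1, h2⟩))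
        simp only [htPdef, if_pos h1, if_neg h2]; linarith
      · simp only [htPdef, if_neg h1, if_pos h2]; linarith [gap_ge j hlt]
      · simp only [htPdef, if_neg h1, if_neg h2]; exact gap_ge j hlt
  have hfeasM : Feas s tM := by
    constructor
    · intro j
      by_cases hj : j ∈ K
      · simp only [htMdef, if_pos hj]
        by_contra hneg
        push_neg at hneg
        rcases hj with ⟨mj, hmj⟩
        have htj0 : t j ≠ 0 := by
          intro h0
          exact hng 0 h0E (-mj) (by push_cast; linarith)
        have htjpos : 0 < t j := lt_of_le_of_ne (hfeas.1 j) (Ne.symm htj0)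
        have h1 : dL s (t i) 0 ≤ t j :=
          dL_min (m := -mj) hs htjpos (by push_cast; linarith)
        have h2 : δL ≤ dL s (t i) 0 :=
          hδLle _ (Finset.mem_union_left _ (Finset.mem_image_of_mem _ h0E))
        linarith
      · simp only [htMdef, if_neg hj]; exact hfeas.1 j
    · intro j j' hjj'
      obtain ⟨hlt, rfl⟩ := succ_eq j j' hjj'
      by_cases h1 : j ∈ K <;> by_cases h2 : nxt j ∈ K
      · simp only [htMdef, if_pos h1, if_pos h2]; linarith [gap_ge j hlt]
      · simp only [htMdef, if_pos h1, if_neg h2]; linarith [gap_ge j hlt]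
      · have : δL ≤ t (nxt j) - t j - s := by
          apply hδLle
          exact Finset.mem_union_right _ (Finset.mem_image_of_mem _
            (Finset.mem_filter.mpr ⟨Finset.mem_univ _, hlt, h1, h2⟩))
        simp only [htMdef, if_neg h1, if_pos h2]; linarith
      · simp only [htMdef, if_neg h1, if_neg h2]; exact gap_ge j hlt
  -- badSet inclusions
  have hbadP : badSet T s A B tP ⊆ badSet T s A B t := by
    intro j hj
    rw [badSet, Finset.mem_filter] at hj ⊢
    refine ⟨Finset.mem_univ _, fun hgood => hj.2 ?_⟩
    by_cases hjK : j ∈ K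
    · rcases hgood with hT' | hG
      · left; simp only [htPdef, if_pos hjK]; linarith
      · exfalso
        rcases mem_Gpts_iff.mp hG with ⟨m, e, he, hx⟩
        rcases hjK with ⟨mj, hmj⟩
        exact hng e (mem_Efin_iff.mpr he) (m - mj) (by push_cast; linarith)
    · simp only [htPdef, if_neg hjK]; exact hgood
  have hbadM : badSet T s A B tM ⊆ badSet T s A B t := by
    intro j hj
    rw [badSet, Finset.mem_filter] at hj ⊢
    refine ⟨Finset.mem_univ _, fun hgood => hj.2 ?_⟩
    by_cases hjK : j ∈ K
    · rcases hgood with hT' | hG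
      · rcases lt_trichotomy (t j - δL) T with hlt | heq | hgt
        · exfalso
          exact hnt (T - t j) (by linarith) (by linarith) j hjK T hTE 0 (by push_cast; ring)
        · right
          apply mem_Gpts_iff.mpr
          refine ⟨0, T, Or.inl (Or.inr rfl), ?_⟩
          simp only [htMdef, if_pos hjK]
          push_cast; linarith
        · left; simp only [htMdef, if_pos hjK]; linarith
      · exfalso
        rcases mem_Gpts_iff.mp hG with ⟨m, e, he, hx⟩
        rcases hjK with ⟨mj, hmj⟩
        exact hng e (mem_Efin_iff.mpr he) (m - mj) (by push_cast; linarith)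
    · simp only [htMdef, if_neg hjK]; exact hgood
  -- gapSet inclusions
  have hgapP : gapSet s tP ⊆ gapSet s t := by
    intro j hj
    rw [gapSet, Finset.mem_filter] at hj ⊢
    obtain ⟨_, hlt, hgap⟩ := hj
    refine ⟨Finset.mem_univ _, hlt, ?_⟩
    by_cases h1 : j ∈ K <;> by_cases h2 : nxt j ∈ K
    · simpa only [htPdef, if_pos h1, if_pos h2, add_sub_add_right_eq_sub] using hgap
    · simp only [htPdef, if_pos h1, if_neg h2] at hgap; linarith
    · exact gapLK j hlt h1 h2
    · simpa only [htPdef, if_neg h1, if_neg h2] using hgap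
  have hgapM : gapSet s tM ⊆ gapSet s t := by
    intro j hj
    rw [gapSet, Finset.mem_filter] at hj ⊢
    obtain ⟨_, hlt, hgap⟩ := hj
    refine ⟨Finset.mem_univ _, hlt, ?_⟩
    by_cases h1 : j ∈ K <;> by_cases h2 : nxt j ∈ K
    · simpa only [htMdef, if_pos h1, if_pos h2, sub_sub_sub_cancel_right] using hgap
    · exact gapRK j hlt h1 h2
    · simp only [htMdef, if_neg h1, if_pos h2] at hgap; linarith
    · simpa only [htMdef, if_neg h1, if_neg h2] using hgap
  -- cardinal bounds
  have hgapcard : ∀ t' : Fin σ → ℝ, (gapSet s t').card ≤ σ := by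
    intro t'
    calc (gapSet s t').card ≤ Finset.univ.card := Finset.card_le_univ _
    _ = σ := by simp
  have hibad : i ∈ badSet T s A B t := by
    rw [badSet, Finset.mem_filter]; exact ⟨Finset.mem_univ _, hbad⟩
  -- strict decrease for tP
  have hmesP : mes T s A B tP < mes T s A B t := by
    rcases Finset.mem_union.mp (FRs.min'_mem hFRne) with hmem | hmem
    · -- grid case
      rcases Finset.mem_image.mp hmem with ⟨e, he, hdr⟩
      have hgoodPi : Good T s A B (tP i) := by
        right
        apply mem_Gpts_iff.mpr
        refine ⟨⌊(t i - e)/s⌋ + 1, e, mem_Efin_iff.mp he, ?_⟩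
        simp only [htPdef, if_pos (show i ∈ K from self_mem_Kset (s := s) (t := t) (i := i))]
        have hδe : δR = dR s (t i) e := by rw [hδRdef, ← hdr]
        rw [hδe]; unfold dR; push_cast; ring
      have hiP : i ∉ badSet T s A B tP := by
        rw [badSet, Finset.mem_filter]
        push_neg
        intro _; exact hgoodPi
      have hcard : (badSet T s A B tP).card < (badSet T s A B t).card :=
        Finset.card_lt_card ((Finset.ssubset_iff_of_subset hbadP).mpr ⟨i, hibad, hiP⟩)
      have h2 := hgapcard tP
      unfold mes
      nlinarith [Finset.card_le_card hgapP]
    · -- merge case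
      rcases Finset.mem_image.mp hmem with ⟨j0, hj0, hdr⟩
      obtain ⟨hlt, hK1, hK2⟩ := (Finset.mem_filter.mp hj0).2
      have hj0gap : j0 ∈ gapSet s t := by
        rw [gapSet, Finset.mem_filter]
        exact ⟨Finset.mem_univ _, hlt, gapRK j0 hlt hK1 hK2⟩
      have hj0P : j0 ∉ gapSet s tP := by
        rw [gapSet, Finset.mem_filter]
        push_neg
        intro _ _
        simp only [htPdef, if_pos hK1, if_neg hK2]
        linarith
      have hcard : (gapSet s tP).card < (gapSet s t).card :=
        Finset.card_lt_card ((Finset.ssubset_iff_of_subset hgapP).mpr ⟨j0, hj0gap, hj0P⟩)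
      unfold mes
      have := Nat.mul_le_mul_right (σ + 1) (Finset.card_le_card hbadP)
      omega
  have hmesM : mes T s A B tM < mes T s A B t := by
    rcases Finset.mem_union.mp (FLs.min'_mem hFLne) with hmem | hmem
    · rcases Finset.mem_image.mp hmem with ⟨e, he, hdr⟩
      have hgoodMi : Good T s A B (tM i) := by
        right
        apply mem_Gpts_iff.mpr
        refine ⟨⌈(t i - e)/s⌉ - 1, e, mem_Efin_iff.mp he, ?_⟩
        simp only [htMdef, if_pos (show i ∈ K from self_mem_Kset (s := s) (t := t) (i := i))]
        have hδe : δL = dL s (t i) e := by rw [hδLdef, ← hdr]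
        rw [hδe]; unfold dL; push_cast; ring
      have hiM : i ∉ badSet T s A B tM := by
        rw [badSet, Finset.mem_filter]
        push_neg
        intro _; exact hgoodMi
      have hcard : (badSet T s A B tM).card < (badSet T s A B t).card :=
        Finset.card_lt_card ((Finset.ssubset_iff_of_subset hbadM).mpr ⟨i, hibad, hiM⟩)
      have h2 := hgapcard tM
      unfold mes
      nlinarith [Finset.card_le_card hgapM]
    · rcases Finset.mem_image.mp hmem with ⟨j0, hj0, hdr⟩
      obtain ⟨hlt, hK1, hK2⟩ := (Finset.mem_filter.mp hj0).2
      have hj0gap : j0 ∈ gapSet s t := by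
        rw [gapSet, Finset.mem_filter]
        exact ⟨Finset.mem_univ _, hlt, gapLK j0 hlt hK1 hK2⟩
      have hj0M : j0 ∉ gapSet s tM := by
        rw [gapSet, Finset.mem_filter]
        push_neg
        intro _ _
        simp only [htMdef, if_neg hK1, if_pos hK2]
        linarith
      have hcard : (gapSet s tM).card < (gapSet s t).card :=
        Finset.card_lt_card ((Finset.ssubset_iff_of_subset hgapM).mpr ⟨j0, hj0gap, hj0M⟩)
      unfold mes
      have := Nat.mul_le_mul_right (σ + 1) (Finset.card_le_card hbadM)
      omega
  -- the segment property
  have hsmT : StrictMono t := hfeas.strictMono hs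
  have hsmP : StrictMono tP := hfeasP.strictMono hs
  have hsmM : StrictMono tM := hfeasM.strictMono hs
  have hSpos : 0 < δR + δL := by linarith
  set aa := δR / (δR + δL) with haadef
  set bb := δL / (δR + δL) with hbbdef
  have hsumab : aa + bb = 1 := by
    rw [haadef, hbbdef, ← add_div, div_self (ne_of_gt hSpos)]
  have hswap : bb * δR = aa * δL := by
    rw [haadef, hbbdef]; field_simp
  refine ⟨tP, tM, hfeasP, hfeasM, hmesP, hmesM, aa, bb,
    div_nonneg hδRpos.le hSpos.le, div_nonneg hδLpos.le hSpos.le, hsumab, ?_⟩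
  funext m
  simp only [Pi.add_apply, Pi.smul_apply, smul_eq_mul, PiF]
  rw [integral_switchFun c hsmM (hAB m).le, integral_switchFun c hsmP (hAB m).le,
    integral_switchFun c hsmT (hAB m).le]
  have hterm : ∀ j : Fin σ,
      aa * min (B m) (max (A m) (tM j)) + bb * min (B m) (max (A m) (tP j))
        = min (B m) (max (A m) (t j)) := by
    intro j
    by_cases hjK : j ∈ K
    · have htMj : tM j = t j - δL := by simp only [htMdef, if_pos hjK]
      have htPj : tP j = t j + δR := by simp only [htPdef, if_pos hjK]
      rw [htMj, htPj]
      have h1 : t j + δR ≤ A m ∨ A m ≤ t j - δL := by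
        by_contra hcon
        push_neg at hcon
        exact hnt (A m - t j) (by linarith [hcon.2]) (by linarith [hcon.1]) j hjK
          (A m) (hAE m) 0 (by push_cast; ring)
      have h2 : t j + δR ≤ B m ∨ B m ≤ t j - δL := by
        by_contra hcon
        push_neg at hcon
        exact hnt (B m - t j) (by linarith [hcon.2]) (by linarith [hcon.1]) j hjK
          (B m) (hBE m) 0 (by push_cast; ring)
      exact clamp_combo (hAB m).le (by linarith) (by linarith) hsumab
        (by linear_combination (t j) * hsumab + hswap) h1 h2
    · have htMj : tM j = t j := by simp only [htMdef, if_neg hjK]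
      have htPj : tP j = t j := by simp only [htPdef, if_neg hjK]
      rw [htMj, htPj]
      linear_combination (min (B m) (max (A m) (t j))) * hsumab
  have hsum2 : aa * (∑ j : Fin σ, (-1:ℝ)^(j:ℕ) * (B m - min (B m) (max (A m) (tM j))))
      + bb * (∑ j : Fin σ, (-1:ℝ)^(j:ℕ) * (B m - min (B m) (max (A m) (tP j))))
      = ∑ j : Fin σ, (-1:ℝ)^(j:ℕ) * (B m - min (B m) (max (A m) (t j))) := by
    rw [Finset.mul_sum, Finset.mul_sum, ← Finset.sum_add_distrib]
    refine Finset.sum_congr rfl (fun j _ => ?_)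
    linear_combination ((-1:ℝ)^(j:ℕ) * (B m)) * hsumab - ((-1:ℝ)^(j:ℕ)) * hterm j
  linear_combination ((B m - A m)⁻¹ * (c * (B m - A m))) * hsumab
    + ((B m - A m)⁻¹ * (1 - 2*c)) * hsum2



lemma main_hull (hs : 0 < s) (hAB : ∀ m, A m < B m) (c : ℝ) :
    ∀ n : ℕ, ∀ t : Fin σ → ℝ, Feas s t → mes T s A B t ≤ n →
      PiF A B σ c t ∈ convexHull ℝ (Vset T s A B σ c) := by
  intro n
  induction n with
  | zero =>
    intro t hfeas hmes
    have hallgood : ∀ i, Good T s A B (t i) := by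
      intro i
      by_contra hbad
      have hmem : i ∈ badSet T s A B t := Finset.mem_filter.mpr ⟨Finset.mem_univ _, hbad⟩
      have h1 : 1 ≤ (badSet T s A B t).card := Finset.card_pos.mpr ⟨i, hmem⟩
      have h2 := Nat.mul_le_mul_right (σ + 1) h1
      unfold mes at hmes
      omega
    exact subset_convexHull ℝ _ ⟨t, hfeas, hallgood, rfl⟩
  | succ n ih =>
    intro t hfeas hmes
    by_cases hallgood : ∀ i, Good T s A B (t i)
    · exact subset_convexHull ℝ _ ⟨t, hfeas, hallgood, rfl⟩
    · push_neg at hallgood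
      obtain ⟨i, hbad⟩ := hallgood
      obtain ⟨tP, tM, hfP, hfM, hmP, hmM, hseg⟩ := step hs hAB c t hfeas i hbad
      have h1 := ih tP hfP (by omega)
      have h2 := ih tM hfM (by omega)
      exact (convex_convexHull ℝ _).segment_subset h2 h1 hseg

lemma feas_mem_hull (hs : 0 < s) (hAB : ∀ m, A m < B m) (c : ℝ) (t : Fin σ → ℝ)
    (hfeas : Feas s t) : PiF A B σ c t ∈ convexHull ℝ (Vset T s A B σ c) :=
  main_hull hs hAB c (mes T s A B t) t hfeas le_rfl


end St16
/-- Lemma 3.9: every extreme point of the projected dwell-time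
polytope `C_{D_s,Π}` is the projection of a feasible control all of whose
switching points lying in `[0,T]` belong to the finite grid
`S = [0,T] ∩ (ℤ·s + ({0,T} ∪ {a_i, b_i}))`. -/
theorem stmt_16
    (T s : ℝ) (hT : 0 < T) (hs : 0 < s) (p : ℝ≥0∞) [Fact (1 ≤ p)] (hp : p ≠ ⊤)
    (M : ℕ) (A B : Fin M → ℝ) (hAB : ∀ i, A i < B i)
    (hsub : ∀ i, Ioo (A i) (B i) ⊆ Ioo (0:ℝ) T)
    (hdisj : ∀ i i' : Fin M, i ≠ i' →
      Disjoint (Ioo (A i) (B i)) (Ioo (A i') (B i'))) :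
    ∀ v ∈ Set.extremePoints ℝ (convexHull ℝ
        ((fun u : Lp ℝ p (volume.restrict (Ioo (0:ℝ) T)) =>
            fun i : Fin M => (B i - A i)⁻¹ *
              ∫ x in Ioo (A i) (B i), (u : ℝ → ℝ) x
                ∂(volume.restrict (Ioo (0:ℝ) T))) ''
          {u : Lp ℝ p (volume.restrict (Ioo (0:ℝ) T)) |
            ∃ c : ℝ, (c = 0 ∨ c = 1) ∧ ∃ t : Fin (⌈T / s⌉₊) → ℝ,
              (∀ i, 0 ≤ t i) ∧
              (∀ i i' : Fin (⌈T / s⌉₊), (i : ℕ) + 1 = (i' : ℕ) → s ≤ t i' - t i) ∧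
              (u : ℝ → ℝ) =ᵐ[volume.restrict (Ioo (0:ℝ) T)]
                switchFun (⌈T / s⌉₊) c t})),
      ∃ c : ℝ, (c = 0 ∨ c = 1) ∧ ∃ t : Fin (⌈T / s⌉₊) → ℝ,
        (∀ i, 0 ≤ t i) ∧
        (∀ i i' : Fin (⌈T / s⌉₊), (i : ℕ) + 1 = (i' : ℕ) → s ≤ t i' - t i) ∧
        (fun i : Fin M => (B i - A i)⁻¹ *
            ∫ x in Ioo (A i) (B i), switchFun (⌈T / s⌉₊) c t x) = v ∧
        ∀ i, t i ≤ T → t i ∈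
          Icc (0:ℝ) T ∩ ⋃ (m : ℤ), (fun x => (m : ℝ) * s + x) ''
            ({0, T} ∪ (Set.range A ∪ Set.range B)) := by
  classical
  intro v hv
  haveI : IsFiniteMeasure (volume.restrict (Ioo (0:ℝ) T)) :=
    ⟨by rw [Measure.restrict_apply_univ]; exact measure_Ioo_lt_top⟩
  -- integral transfer lemma
  have key : ∀ (f g : ℝ → ℝ), f =ᵐ[volume.restrict (Ioo (0:ℝ) T)] g → ∀ m : Fin M,
      ∫ x in Ioo (A m) (B m), f x ∂(volume.restrict (Ioo (0:ℝ) T))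
        = ∫ x in Ioo (A m) (B m), g x := by
    intro f g hae m
    rw [Measure.restrict_restrict measurableSet_Ioo, Set.inter_eq_left.mpr (hsub m)]
    exact integral_congr_ae (ae_restrict_of_ae_restrict_of_subset (hsub m) hae)
  set V2 : Set (Fin M → ℝ) :=
    St16.Vset T s A B (⌈T / s⌉₊) 0 ∪ St16.Vset T s A B (⌈T / s⌉₊) 1 with hV2
  set Xim := ((fun u : Lp ℝ p (volume.restrict (Ioo (0:ℝ) T)) =>
            fun i : Fin M => (B i - A i)⁻¹ *
              ∫ x in Ioo (A i) (B i), (u : ℝ → ℝ) x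
                ∂(volume.restrict (Ioo (0:ℝ) T))) ''
          {u : Lp ℝ p (volume.restrict (Ioo (0:ℝ) T)) |
            ∃ c : ℝ, (c = 0 ∨ c = 1) ∧ ∃ t : Fin (⌈T / s⌉₊) → ℝ,
              (∀ i, 0 ≤ t i) ∧
              (∀ i i' : Fin (⌈T / s⌉₊), (i : ℕ) + 1 = (i' : ℕ) → s ≤ t i' - t i) ∧
              (u : ℝ → ℝ) =ᵐ[volume.restrict (Ioo (0:ℝ) T)]
                switchFun (⌈T / s⌉₊) c t}) with hXim
  have hXsub : Xim ⊆ convexHull ℝ V2 := by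
    rintro w ⟨u, ⟨c, hc, t, h0, hgap, hae⟩, rfl⟩
    have heq : (fun m : Fin M => (B m - A m)⁻¹ *
        ∫ x in Ioo (A m) (B m), (u : ℝ → ℝ) x ∂(volume.restrict (Ioo (0:ℝ) T)))
          = St16.PiF A B (⌈T / s⌉₊) c t := by
      funext m
      rw [key _ _ hae m]
      rfl
    have hmem := St16.feas_mem_hull (T := T) hs hAB c t ⟨h0, hgap⟩
    rw [show ((fun u : Lp ℝ p (volume.restrict (Ioo (0:ℝ) T)) =>
            fun i : Fin M => (B i - A i)⁻¹ *
              ∫ x in Ioo (A i) (B i), (u : ℝ → ℝ) x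
                ∂(volume.restrict (Ioo (0:ℝ) T))) u) = St16.PiF A B (⌈T / s⌉₊) c t from heq]
    refine convexHull_mono ?_ hmem
    rcases hc with rfl | rfl
    · exact Set.subset_union_left
    · exact Set.subset_union_right
  have hVX : V2 ⊆ Xim := by
    rintro w hw
    have hw' : ∃ c : ℝ, (c = 0 ∨ c = 1) ∧ ∃ t : Fin (⌈T / s⌉₊) → ℝ, St16.Feas s t ∧
        (∀ i, St16.Good T s A B (t i)) ∧ w = St16.PiF A B (⌈T / s⌉₊) c t := by
      rcases hw with h | h
      · obtain ⟨t, h1, h2, h3⟩ := h; exact ⟨0, Or.inl rfl, t, h1, h2, h3⟩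
      · obtain ⟨t, h1, h2, h3⟩ := h; exact ⟨1, Or.inr rfl, t, h1, h2, h3⟩
    obtain ⟨c, hc, t, hfeas, hgood, rfl⟩ := hw'
    have hsm : StrictMono t := hfeas.strictMono hs
    have hmeas : Measurable (switchFun (⌈T / s⌉₊) c t) := by
      have hfun : switchFun (⌈T / s⌉₊) c t = fun x =>
          c + (1 - 2*c) * ∑ j : Fin (⌈T / s⌉₊), (-1:ℝ)^(j:ℕ) * (if t j ≤ x then 1 else 0) :=
        funext (fun x => switchFun_apply c hsm x)
      rw [hfun]
      apply Measurable.add measurable_const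
      apply Measurable.const_mul
      apply Finset.measurable_sum
      intro j _
      apply Measurable.const_mul
      exact Measurable.ite measurableSet_Ici measurable_const measurable_const
    have hbound : ∀ x, ‖switchFun (⌈T / s⌉₊) c t x‖ ≤ |c| + |1 - c| := by
      intro x
      rw [Real.norm_eq_abs]
      unfold switchFun
      split
      · exact le_add_of_nonneg_right (abs_nonneg _)
      · exact le_add_of_nonneg_left (abs_nonneg _)
    have hmem2 : MeasureTheory.MemLp (switchFun (⌈T / s⌉₊) c t) p
        (volume.restrict (Ioo (0:ℝ) T)) :=
      MeasureTheory.MemLp.of_bound hmeas.aestronglyMeasurable _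
        (Filter.Eventually.of_forall hbound)
    refine ⟨hmem2.toLp _, ⟨c, hc, t, hfeas.1, hfeas.2, hmem2.coeFn_toLp⟩, ?_⟩
    funext m
    show (B m - A m)⁻¹ * (∫ x in Ioo (A m) (B m),
        ((hmem2.toLp (switchFun (⌈T / s⌉₊) c t)) : ℝ → ℝ) x
          ∂(volume.restrict (Ioo (0:ℝ) T))) = _
    rw [key _ _ hmem2.coeFn_toLp m]
    rfl
  have hhull : convexHull ℝ Xim = convexHull ℝ V2 :=
    Set.Subset.antisymm (convexHull_min hXsub (convex_convexHull ℝ _)) (convexHull_mono hVX)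
  rw [hhull] at hv
  have hvV2 : v ∈ V2 := extremePoints_convexHull_subset hv
  have hv' : ∃ c : ℝ, (c = 0 ∨ c = 1) ∧ ∃ t : Fin (⌈T / s⌉₊) → ℝ, St16.Feas s t ∧
      (∀ i, St16.Good T s A B (t i)) ∧ v = St16.PiF A B (⌈T / s⌉₊) c t := by
    rcases hvV2 with h | h
    · obtain ⟨t, h1, h2, h3⟩ := h; exact ⟨0, Or.inl rfl, t, h1, h2, h3⟩
    · obtain ⟨t, h1, h2, h3⟩ := h; exact ⟨1, Or.inr rfl, t, h1, h2, h3⟩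
  obtain ⟨c, hc, t, hfeas, hgood, rfl⟩ := hv'
  refine ⟨c, hc, t, hfeas.1, hfeas.2, rfl, ?_⟩
  intro i hiT
  rcases hgood i with h | h
  · linarith
  · exact ⟨⟨hfeas.1 i, hiT⟩, h⟩
end

section
/- Let T = 3, s = 3/2, σ = 2, p ∈ [1,∞), and let I_j = (j−1, j) for j = 1,2,3. For b ∈ {0,1} and 0 ≤ t₁ ≤ t₂, let u_{b;t₁,t₂} : [0,∞) → {0,1} be defined by u_{b;t₁,t₂}(t) = b if |{i ∈ {1,2} : t_i ≤ t}| is even and 1 − b otherwise. Let D_s ⊆ L^p(0,3) be the set of all u such that there exist b ∈ {0,1} and t₁, t₂ ≥ 0 with t₂ − t₁ ≥ 3/2 and u = u_{b;t₁,t₂} almost everywhere on (0,3), define Π(u) = (∫_{j−1}^{j} u dλ)_{j=1}^3 ∈ ℝ³, and set C_{D_s,Π} := conv{Π(u) : u ∈ D_s}. Then the point (0, 1, 1/2) belongs to C_{D_s,Π} and is the unique minimizer of the linear functional x ↦ x₁ − x₂ + (1/2)·x₃ over C_{D_s,Π}; in particular, C_{D_s,Π} has a fractional vertex and is not a 0/1-polytope.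 -/
open MeasureTheory Set Filter
open scoped ENNReal

/-- The minimum dwell time constraint set `D_s` for `T = 3`, `s = 3/2`,
`σ = 2` in `L^p(0,3)`. -/
def dwellSet (p : ℝ≥0∞) : Set (Lp ℝ p (volume.restrict (Ioo (0:ℝ) 3))) :=
  {u | ∃ c : ℝ, (c = 0 ∨ c = 1) ∧ ∃ t : Fin 2 → ℝ,
    (∀ i, 0 ≤ t i) ∧ (3/2 : ℝ) ≤ t 1 - t 0 ∧
    (u : ℝ → ℝ) =ᵐ[volume.restrict (Ioo (0:ℝ) 3)] switchFun 2 c t}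

/-- The projection `Π(u) = (∫_{j-1}^{j} u dλ)_{j=1}^3` on `L^p(0,3)`. -/
noncomputable def proj3 (p : ℝ≥0∞)
    (u : Lp ℝ p (volume.restrict (Ioo (0:ℝ) 3))) : Fin 3 → ℝ :=
  fun j => ∫ x in Ioo ((j:ℕ):ℝ) (((j:ℕ):ℝ) + 1), (u : ℝ → ℝ) x
    ∂(volume.restrict (Ioo (0:ℝ) 3))

/-! ### Auxiliary definitions and lemmas -/

noncomputable def Mlen (a b l r : ℝ) : ℝ := max (min b r - max a l) 0

lemma vol_Ioo_inter_Ico (l r a b : ℝ) :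
    (volume (Ioo l r ∩ Ico a b)).toReal = Mlen a b l r := by
  have h1 : Ioo (max l a) (min r b) ⊆ Ioo l r ∩ Ico a b := by
    rintro x ⟨hx1, hx2⟩
    refine ⟨⟨lt_of_le_of_lt (le_max_left _ _) hx1, lt_of_lt_of_le hx2 (min_le_left _ _)⟩,
      (le_max_right l a).trans hx1.le, lt_of_lt_of_le hx2 (min_le_right _ _)⟩
  have h2 : Ioo l r ∩ Ico a b ⊆ Icc (max l a) (min r b) := by
    rintro x ⟨⟨hx1, hx2⟩, hx3, hx4⟩
    exact ⟨max_le hx1.le hx3, le_min hx2.le hx4.le⟩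
  have key : volume (Ioo l r ∩ Ico a b) = ENNReal.ofReal (min r b - max l a) := by
    refine le_antisymm ((measure_mono h2).trans_eq ?_) (le_trans (le_of_eq ?_) (measure_mono h1))
    · exact Real.volume_Icc
    · exact (Real.volume_Ioo).symm
  rw [key, ENNReal.toReal_ofReal', Mlen, min_comm r b, max_comm l a]

lemma switchFun_two (c : ℝ) (t : Fin 2 → ℝ) (h : t 0 < t 1) :
    switchFun 2 c t = fun x => c + (1 - 2*c) * (Ico (t 0) (t 1)).indicator (fun _ => (1:ℝ)) x := by
  funext x
  have hcard : (Finset.univ.filter fun i => t i ≤ x).card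
      = (if t 0 ≤ x then 1 else 0) + (if t 1 ≤ x then 1 else 0) := by
    rw [Finset.card_filter]
    exact Fin.sum_univ_two _
  simp only [switchFun, hcard, Set.indicator_apply, Set.mem_Ico]
  by_cases h0 : t 0 ≤ x <;> by_cases h1 : t 1 ≤ x
  · simp [h0, h1]
  · simp [h0, h1, not_le.mp h1]; ring
  · exact absurd (h.le.trans h1) h0
  · simp [h0, h1]

lemma integral_step (l r a b c : ℝ) (hlr : l ≤ r) :
    ∫ x in Ioo l r, (c + (1 - 2*c) * (Ico a b).indicator (fun _ => (1:ℝ)) x)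
      = c * (r - l) + (1 - 2*c) * Mlen a b l r := by
  have hconst : Integrable (fun _ : ℝ => c) (volume.restrict (Ioo l r)) :=
    integrableOn_const (by rw [Real.volume_Ioo]; exact ENNReal.ofReal_ne_top)
  have hind : Integrable ((Ico a b).indicator (fun _ => (1:ℝ))) (volume.restrict (Ioo l r)) :=
    (integrableOn_const (by
      rw [Real.volume_Ioo]; exact ENNReal.ofReal_ne_top)).indicator measurableSet_Ico
  rw [integral_add hconst (hind.const_mul _), integral_const_mul, setIntegral_const,
    setIntegral_indicator measurableSet_Ico, setIntegral_const]
  rw [measureReal_def, measureReal_def]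
  rw [Real.volume_Ioo, smul_eq_mul, smul_eq_mul, mul_one,
    ENNReal.toReal_ofReal (by linarith : (0:ℝ) ≤ r - l), vol_Ioo_inter_Ico]
  ring

lemma proj3_formula (p : ℝ≥0∞) [Fact (1 ≤ p)] (u : Lp ℝ p (volume.restrict (Ioo (0:ℝ) 3)))
    (c : ℝ) (t : Fin 2 → ℝ) (hab : t 0 < t 1)
    (hu : (u : ℝ → ℝ) =ᵐ[volume.restrict (Ioo (0:ℝ) 3)] switchFun 2 c t) (j : Fin 3) :
    proj3 p u j = c + (1 - 2*c) * Mlen (t 0) (t 1) ((j:ℕ):ℝ) (((j:ℕ):ℝ) + 1) := by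
  simp only [proj3]
  set l : ℝ := ((j:ℕ):ℝ) with hl
  have hl0 : (0:ℝ) ≤ l := Nat.cast_nonneg _
  have hl2 : l + 1 ≤ 3 := by
    have h2 : (j:ℕ) ≤ 2 := Nat.lt_succ_iff.mp j.isLt
    have : (l:ℝ) ≤ 2 := by rw [hl]; exact_mod_cast h2
    linarith
  have hsub : Ioo l (l+1) ⊆ Ioo (0:ℝ) 3 := fun x hx =>
    ⟨lt_of_le_of_lt hl0 hx.1, lt_of_lt_of_le hx.2 hl2⟩
  have step1 : (∫ x in Ioo l (l+1), (u : ℝ → ℝ) x ∂(volume.restrict (Ioo (0:ℝ) 3)))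
      = ∫ x in Ioo l (l+1), switchFun 2 c t x ∂(volume.restrict (Ioo (0:ℝ) 3)) :=
    setIntegral_congr_ae measurableSet_Ioo (hu.mono fun x hx _ => hx)
  rw [step1, Measure.restrict_restrict measurableSet_Ioo, inter_eq_left.mpr hsub,
    switchFun_two c t hab, integral_step l (l+1) (t 0) (t 1) c (by linarith)]
  ring

lemma key0 (a b : ℝ) (ha : 0 ≤ a) (hb : a + 3/2 ≤ b) :
    -3/4 ≤ Mlen a b 0 1 - Mlen a b 1 2 + Mlen a b 2 3 / 2 ∧
    (Mlen a b 0 1 - Mlen a b 1 2 + Mlen a b 2 3 / 2 ≤ -3/4 →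
      Mlen a b 0 1 = 0 ∧ Mlen a b 1 2 = 1 ∧ Mlen a b 2 3 = 1/2) := by
  simp only [Mlen, min_eq_right (by linarith : (1:ℝ) ≤ b), max_eq_left ha]
  rcases le_total a 1 with h1 | h1
  · simp only [max_eq_right (by linarith : a ≤ (1:ℝ)), max_eq_right (by linarith : a ≤ (2:ℝ)),
      max_eq_left (by linarith : (0:ℝ) ≤ 1 - a)]
    rcases le_total b 2 with h2 | h2
    · simp only [min_eq_left h2, min_eq_left (by linarith : b ≤ (3:ℝ)),
        max_eq_right (by linarith : b - 2 ≤ (0:ℝ)),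
        max_eq_left (by linarith : (0:ℝ) ≤ b - 1)]
      exact ⟨by linarith, fun h => ⟨by first | trivial | linarith, by first | trivial | linarith,
        by first | trivial | linarith⟩⟩
    · simp only [min_eq_right h2, max_eq_left (by linarith : (0:ℝ) ≤ 2 - 1)]
      rcases le_total b 3 with h3 | h3
      · simp only [min_eq_left h3, max_eq_left (by linarith : (0:ℝ) ≤ b - 2)]
        exact ⟨by linarith, fun h => ⟨by first | trivial | linarith, by first | trivial | linarith,
          by first | trivial | linarith⟩⟩
      · simp only [min_eq_right h3, max_eq_left (by linarith : (0:ℝ) ≤ 3 - 2)]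
        exact ⟨by linarith, fun h => ⟨by first | trivial | linarith, by first | trivial | linarith,
          by first | trivial | linarith⟩⟩
  · simp only [max_eq_left h1, max_eq_right (by linarith : 1 - a ≤ (0:ℝ)),
      min_eq_right (by linarith : (2:ℝ) ≤ b)]
    rcases le_total a 2 with h2 | h2
    · simp only [max_eq_right h2, max_eq_left (by linarith : (0:ℝ) ≤ 2 - a)]
      rcases le_total b 3 with h3 | h3
      · simp only [min_eq_left h3, max_eq_left (by linarith : (0:ℝ) ≤ b - 2)]
        exact ⟨by linarith, fun h => ⟨by first | trivial | linarith, by first | trivial | linarith,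
          by first | trivial | linarith⟩⟩
      · simp only [min_eq_right h3, max_eq_left (by linarith : (0:ℝ) ≤ 3 - 2)]
        exact ⟨by linarith, fun h => ⟨by first | trivial | linarith, by first | trivial | linarith,
          by first | trivial | linarith⟩⟩
    · simp only [max_eq_left h2, max_eq_right (by linarith : 2 - a ≤ (0:ℝ))]
      have h3 : (0:ℝ) ≤ max (min b 3 - a) 0 := le_max_right _ _
      exact ⟨by linarith, fun h => ⟨by first | trivial | linarith, by first | trivial | linarith,
        by first | trivial | linarith⟩⟩

lemma key1 (a b : ℝ) (ha : 0 ≤ a) (hb : a + 3/2 ≤ b) :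
    Mlen a b 0 1 + Mlen a b 2 3 / 2 ≤ 1/2 + Mlen a b 1 2 := by
  simp only [Mlen, min_eq_right (by linarith : (1:ℝ) ≤ b), max_eq_left ha]
  rcases le_total a 1 with h1 | h1
  · simp only [max_eq_right (by linarith : a ≤ (1:ℝ)), max_eq_right (by linarith : a ≤ (2:ℝ)),
      max_eq_left (by linarith : (0:ℝ) ≤ 1 - a)]
    rcases le_total b 2 with h2 | h2
    · simp only [min_eq_left h2, min_eq_left (by linarith : b ≤ (3:ℝ)),
        max_eq_right (by linarith : b - 2 ≤ (0:ℝ)),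
        max_eq_left (by linarith : (0:ℝ) ≤ b - 1)]
      linarith
    · simp only [min_eq_right h2, max_eq_left (by linarith : (0:ℝ) ≤ 2 - 1)]
      rcases le_total b 3 with h3 | h3
      · simp only [min_eq_left h3, max_eq_left (by linarith : (0:ℝ) ≤ b - 2)]
        linarith
      · simp only [min_eq_right h3, max_eq_left (by linarith : (0:ℝ) ≤ 3 - 2)]
        linarith
  · simp only [max_eq_left h1, max_eq_right (by linarith : 1 - a ≤ (0:ℝ)),
      min_eq_right (by linarith : (2:ℝ) ≤ b)]
    rcases le_total a 2 with h2 | h2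
    · simp only [max_eq_right h2, max_eq_left (by linarith : (0:ℝ) ≤ 2 - a)]
      rcases le_total b 3 with h3 | h3
      · simp only [min_eq_left h3, max_eq_left (by linarith : (0:ℝ) ≤ b - 2)]
        linarith
      · simp only [min_eq_right h3, max_eq_left (by linarith : (0:ℝ) ≤ 3 - 2)]
        linarith
    · simp only [max_eq_left h2, max_eq_right (by linarith : 2 - a ≤ (0:ℝ))]
      have h3 : max (min b 3 - a) 0 ≤ 1 :=
        max_le (by have := min_le_right b 3; linarith) (by norm_num)
      linarith

/-- Every point of the image satisfies the lower bound and the uniqueness property. -/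
lemma image_good (p : ℝ≥0∞) [Fact (1 ≤ p)] :
    proj3 p '' dwellSet p ⊆
      {x : Fin 3 → ℝ | -3/4 ≤ x 0 - x 1 + (1/2) * x 2 ∧
        (x 0 - x 1 + (1/2) * x 2 = -3/4 → x = ![0, 1, 1/2])} := by
  rintro y ⟨u, ⟨c, hc, t, ht0, hts, hu⟩, rfl⟩
  have hab : t 0 < t 1 := by linarith
  have ha0 : 0 ≤ t 0 := ht0 0
  have hb : t 0 + 3/2 ≤ t 1 := by linarith
  have e0 := proj3_formula p u c t hab hu 0
  have e1 := proj3_formula p u c t hab hu 1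
  have e2 := proj3_formula p u c t hab hu 2
  norm_num at e0 e1 e2
  rcases hc with rfl | rfl
  · norm_num at e0 e1 e2
    obtain ⟨hlow, hequ⟩ := key0 (t 0) (t 1) ha0 hb
    constructor
    · rw [e0, e1, e2]; linarith
    · intro heq
      rw [e0, e1, e2] at heq
      obtain ⟨q0, q1, q2⟩ := hequ (by linarith)
      funext i
      fin_cases i <;> simp [e0, e1, e2, q0, q1, q2]
  · have hkey := key1 (t 0) (t 1) ha0 hb
    norm_num at e0 e1 e2
    constructor
    · rw [e0, e1, e2]; linarith
    · intro heq
      rw [e0, e1, e2] at heq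
      exfalso; linarith

lemma good_convex :
    Convex ℝ {x : Fin 3 → ℝ | -3/4 ≤ x 0 - x 1 + (1/2) * x 2 ∧
        (x 0 - x 1 + (1/2) * x 2 = -3/4 → x = ![0, 1, 1/2])} := by
  rintro x ⟨hx1, hx2⟩ y ⟨hy1, hy2⟩ s r hs hr hsr
  have hxs : s * (-3/4) ≤ s * (x 0 - x 1 + (1/2) * x 2) := mul_le_mul_of_nonneg_left hx1 hs
  have hys : r * (-3/4) ≤ r * (y 0 - y 1 + (1/2) * y 2) := mul_le_mul_of_nonneg_left hy1 hr
  have happ : ∀ i, (s • x + r • y) i = s * x i + r * y i := fun i => by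
    simp [Pi.add_apply, Pi.smul_apply, smul_eq_mul]
  constructor
  · rw [happ 0, happ 1, happ 2]; nlinarith
  · intro heq
    rw [happ 0, happ 1, happ 2] at heq
    rcases hs.eq_or_lt with rfl | hs'
    · have hr1 : r = 1 := by linarith
      subst hr1
      have hyv : y = ![0, 1, 1/2] := hy2 (by linarith [heq])
      simp [hyv]
    · rcases hr.eq_or_lt with rfl | hr'
      · have hs1 : s = 1 := by linarith
        subst hs1
        have hxv : x = ![0, 1, 1/2] := hx2 (by linarith [heq])
        simp [hxv]
      · have hfx : x 0 - x 1 + (1/2) * x 2 = -3/4 := by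
          by_contra hne
          have hgt : -3/4 < x 0 - x 1 + (1/2) * x 2 := lt_of_le_of_ne hx1 (Ne.symm hne)
          have := mul_lt_mul_of_pos_left hgt hs'
          nlinarith
        have hfy : y 0 - y 1 + (1/2) * y 2 = -3/4 := by
          by_contra hne
          have hgt : -3/4 < y 0 - y 1 + (1/2) * y 2 := lt_of_le_of_ne hy1 (Ne.symm hne)
          have := mul_lt_mul_of_pos_left hgt hr'
          nlinarith
        rw [hx2 hfx, hy2 hfy, ← add_smul, hsr, one_smul]

/-- for `T = 3`, `s = 3/2`, the point `(0,1,1/2)` belongs to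
`C_{D_s,Π}` and is the unique minimizer of `x ↦ x₁ - x₂ + x₃/2` over
`C_{D_s,Π}`; in particular `C_{D_s,Π}` has a fractional extreme point and is
not a 0/1-polytope. -/
theorem stmt_17 (p : ℝ≥0∞) [Fact (1 ≤ p)] (hp : p ≠ ⊤) :
    (![0, 1, 1/2] : Fin 3 → ℝ) ∈ convexHull ℝ (proj3 p '' dwellSet p) ∧
    (∀ x ∈ convexHull ℝ (proj3 p '' dwellSet p),
      (![0, 1, 1/2] : Fin 3 → ℝ) 0 - (![0, 1, 1/2] : Fin 3 → ℝ) 1 +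
          (1/2) * (![0, 1, 1/2] : Fin 3 → ℝ) 2 ≤
        x 0 - x 1 + (1/2) * x 2) ∧
    (∀ x ∈ convexHull ℝ (proj3 p '' dwellSet p),
      x 0 - x 1 + (1/2) * x 2 =
        (![0, 1, 1/2] : Fin 3 → ℝ) 0 - (![0, 1, 1/2] : Fin 3 → ℝ) 1 +
          (1/2) * (![0, 1, 1/2] : Fin 3 → ℝ) 2 →
      x = ![0, 1, 1/2]) ∧
    (![0, 1, 1/2] : Fin 3 → ℝ) ∈
      Set.extremePoints ℝ (convexHull ℝ (proj3 p '' dwellSet p)) ∧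
    ¬ ∃ F : Finset (Fin 3 → ℝ),
        (F : Set (Fin 3 → ℝ)) ⊆ {x | ∀ i, x i = 0 ∨ x i = 1} ∧
        convexHull ℝ (proj3 p '' dwellSet p) = convexHull ℝ (F : Set (Fin 3 → ℝ)) := by
  -- value of the objective at the candidate point
  have hv0 : (![0, 1, 1/2] : Fin 3 → ℝ) 0 = 0 := rfl
  have hv1 : (![0, 1, 1/2] : Fin 3 → ℝ) 1 = 1 := rfl
  have hv2 : (![0, 1, 1/2] : Fin 3 → ℝ) 2 = 1/2 := rfl
  -- the convex hull is contained in the "good" set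
  have hull_sub := convexHull_min (image_good p) good_convex
  -- construction of the witness function
  have hmem : MemLp ((Ico (1:ℝ) (5/2)).indicator fun _ => (1:ℝ)) p
      (volume.restrict (Ioo (0:ℝ) 3)) := by
    refine memLp_indicator_const p measurableSet_Ico 1 (Or.inr ?_)
    refine ne_of_lt (lt_of_le_of_lt (Measure.restrict_apply_le _ _) ?_)
    rw [Real.volume_Ico]
    exact ENNReal.ofReal_lt_top
  set u₀ : Lp ℝ p (volume.restrict (Ioo (0:ℝ) 3)) := hmem.toLp _ with hu₀def
  have hlt : (![1, 5/2] : Fin 2 → ℝ) 0 < (![1, 5/2] : Fin 2 → ℝ) 1 := by norm_num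
  have hsw : switchFun 2 0 (![1, 5/2] : Fin 2 → ℝ)
      = fun x => (Ico (1:ℝ) (5/2)).indicator (fun _ => (1:ℝ)) x := by
    rw [switchFun_two 0 (![1, 5/2] : Fin 2 → ℝ) hlt]
    funext x
    norm_num
  have hae : (u₀ : ℝ → ℝ) =ᵐ[volume.restrict (Ioo (0:ℝ) 3)]
      switchFun 2 0 (![1, 5/2] : Fin 2 → ℝ) := by
    rw [hsw]
    exact hmem.coeFn_toLp
  have hu₀mem : u₀ ∈ dwellSet p := by
    refine ⟨0, Or.inl rfl, ![1, 5/2], ?_, by norm_num, hae⟩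
    intro i; fin_cases i <;> norm_num
  have hproj : proj3 p u₀ = ![0, 1, 1/2] := by
    funext j
    have hf := proj3_formula p u₀ 0 (![1, 5/2] : Fin 2 → ℝ)
      (by norm_num : (![1, 5/2] : Fin 2 → ℝ) 0 < (![1, 5/2] : Fin 2 → ℝ) 1) hae j
    fin_cases j <;>
      simp only [hf] <;>
      norm_num [Mlen, min_def, max_def]
  have hmemhull : (![0, 1, 1/2] : Fin 3 → ℝ) ∈ convexHull ℝ (proj3 p '' dwellSet p) :=
    subset_convexHull ℝ _ ⟨u₀, hu₀mem, hproj⟩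
  -- part 3 helper
  have part3 : ∀ x ∈ convexHull ℝ (proj3 p '' dwellSet p),
      x 0 - x 1 + (1/2) * x 2 = -3/4 → x = ![0, 1, 1/2] := fun x hx h => (hull_sub hx).2 h
  have part2 : ∀ x ∈ convexHull ℝ (proj3 p '' dwellSet p),
      -3/4 ≤ x 0 - x 1 + (1/2) * x 2 := fun x hx => (hull_sub hx).1
  have part4 : (![0, 1, 1/2] : Fin 3 → ℝ) ∈
      Set.extremePoints ℝ (convexHull ℝ (proj3 p '' dwellSet p)) := by
    refine ⟨hmemhull, fun x₁ hx₁ x₂ hx₂ hseg => ?_⟩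
    obtain ⟨s, r, hs, hr, hsr, heq⟩ := hseg
    have h0 := congrFun heq 0
    have h1 := congrFun heq 1
    have h2 := congrFun heq 2
    simp only [Pi.add_apply, Pi.smul_apply, smul_eq_mul, hv0, hv1, hv2] at h0 h1 h2
    have hb1 := part2 x₁ hx₁
    have hb2 := part2 x₂ hx₂
    have hfx1 : x₁ 0 - x₁ 1 + (1/2) * x₁ 2 = -3/4 := by
      by_contra hne
      have hgt : -3/4 < x₁ 0 - x₁ 1 + (1/2) * x₁ 2 := lt_of_le_of_ne hb1 (Ne.symm hne)
      have hh1 := mul_lt_mul_of_pos_left hgt hs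
      have hh2 := mul_le_mul_of_nonneg_left hb2 hr.le
      nlinarith
    have hfx2 : x₂ 0 - x₂ 1 + (1/2) * x₂ 2 = -3/4 := by
      by_contra hne
      have hgt : -3/4 < x₂ 0 - x₂ 1 + (1/2) * x₂ 2 := lt_of_le_of_ne hb2 (Ne.symm hne)
      have hh1 := mul_lt_mul_of_pos_left hgt hr
      have hh2 := mul_le_mul_of_nonneg_left hb1 hs.le
      nlinarith
    exact part3 x₁ hx₁ hfx1
  refine ⟨hmemhull, ?_, ?_, part4, ?_⟩
  · intro x hx
    rw [hv0, hv1, hv2]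
    have := part2 x hx
    linarith
  · intro x hx h
    refine part3 x hx ?_
    rw [hv0, hv1, hv2] at h
    rw [h]; norm_num
  · rintro ⟨F, hF01, hFeq⟩
    rw [hFeq] at part4
    have hvF : (![0, 1, 1/2] : Fin 3 → ℝ) ∈ (F : Set (Fin 3 → ℝ)) :=
      extremePoints_convexHull_subset part4
    have h2 := hF01 hvF 2
    rw [hv2] at h2
    rcases h2 with h | h <;> norm_num at h
end
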